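/- Let p and q be coprime positive integers and let S = {n : 0 < n < pq and n = qx + py for some integers x, y with 0 < x < p and 0 < y < q}. Then (2/(pq)) · Σ_{n ∈ S} (pq - 2n) = -(p-1)(p+1)(q-1)(q+1)/(3pq), as an identity of rational numbers. -/

import Mathlib

open Finset

lemma sum_range_cast (n : ℕ) : ∑ i ∈ range n, (i : ℚ) = n * (n - 1) / 2 := by
  induction n with
  | zero => simp
  | succ k ih => rw [Finset.sum_range_succ, ih]; push_cast; ring

lemma sum_range_sq_cast (n : ℕ) : ∑ i ∈ range n, (i : ℚ)^2 = n * (n - 1) * (2 * n - 1) / 6 := by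
  induction n with
  | zero => simp
  | succ k ih => rw [Finset.sum_range_succ, ih]; push_cast; ring

lemma ioo_sum (m : ℕ) (hm : 0 < m) (g : ℕ → ℚ) :
    ∑ i ∈ Ioo 0 m, g i = (∑ i ∈ range m, g i) - g 0 := by
  rw [Finset.range_eq_Ico, ← Finset.Ioo_insert_left hm, Finset.sum_insert left_notMem_Ioo]
  ring

lemma perm_sum (p q : ℕ) (hp : 0 < p) (hpq : Nat.Coprime p q) (g : ℕ → ℚ) :
    ∑ x ∈ Ioo 0 p, g (q * x % p) = ∑ x ∈ Ioo 0 p, g x := by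
  have hmem : ∀ x ∈ Ioo 0 p, q * x % p ∈ Ioo 0 p := by
    intro x hx
    rw [mem_Ioo] at hx ⊢
    refine ⟨Nat.pos_of_ne_zero ?_, Nat.mod_lt _ hp⟩
    intro h0
    have hdvd : p ∣ q * x := Nat.dvd_of_mod_eq_zero h0
    have : p ∣ x := Nat.Coprime.dvd_of_dvd_mul_left hpq hdvd
    have : p ∣ x := this
    have := Nat.le_of_dvd hx.1 this
    omega
  have hinj : ∀ x₁ ∈ Ioo 0 p, ∀ x₂ ∈ Ioo 0 p, q * x₁ % p = q * x₂ % p → x₁ = x₂ := by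
    intro x₁ h₁ x₂ h₂ h
    rw [mem_Ioo] at h₁ h₂
    have hm : x₁ ≡ x₂ [MOD p] := Nat.ModEq.cancel_left_of_coprime hpq h
    have := hm.eq_of_lt_of_lt h₁.2 h₂.2
    exact this
  have himg : (Ioo 0 p).image (fun x => q * x % p) = Ioo 0 p := by
    apply Finset.eq_of_subset_of_card_le
    · intro n hn
      simp only [mem_image] at hn
      obtain ⟨x, hx, rfl⟩ := hn
      exact hmem x hx
    · rw [Finset.card_image_of_injOn (fun a ha b hb => hinj a ha b hb)]
  calc ∑ x ∈ Ioo 0 p, g (q * x % p) = ∑ n ∈ (Ioo 0 p).image (fun x => q * x % p), g n :=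
        (Finset.sum_image hinj).symm
    _ = ∑ x ∈ Ioo 0 p, g x := by rw [himg]

lemma sum_affine (m : ℕ) (a b : ℚ) :
    ∑ y ∈ range m, (a + b * y) = m * a + b * (m * ((m : ℚ) - 1) / 2) := by
  rw [Finset.sum_add_distrib, Finset.sum_const, ← Finset.mul_sum, sum_range_cast, card_range,
    nsmul_eq_mul]

lemma torusInnerSum (p q x f r : ℕ) (hp : 0 < p) (hq : 0 < q) (hdm : p * f + r = q * x)
    (hr0 : 0 < r) (hrp : r < p) (hfq : f < q) :
    (∑ y ∈ Finset.Ioo 0 q,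
        if q * x + p * y < p * q then ((p : ℚ) * q - 2 * ((q * x + p * y : ℕ) : ℚ)) else 0)
      = (-(((q : ℚ) - 1) * q)) * x + (-((q : ℚ) - 1)) * (r : ℚ)
        + ((q : ℚ) ^ 2 / p) * (x : ℚ) ^ 2 + (-(1 / (p : ℚ))) * (r : ℚ) ^ 2 := by
  have hp0 : (p : ℚ) ≠ 0 := Nat.cast_ne_zero.mpr hp.ne'
  have hfilter : (Finset.Ioo 0 q).filter (fun y => q * x + p * y < p * q)
      = Finset.Ioo 0 (q - f) := by
    ext y
    simp only [Finset.mem_filter, Finset.mem_Ioo]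
    constructor
    · rintro ⟨⟨hy0, hyq⟩, hlt⟩
      refine ⟨hy0, ?_⟩
      have h1 : p * (f + y) < p * q := by
        calc p * (f + y) = p * f + p * y := by ring
          _ < q * x + p * y := by omega
          _ < p * q := hlt
      have := Nat.lt_of_mul_lt_mul_left h1
      omega
    · rintro ⟨hy0, hyqf⟩
      have h3 : f + y + 1 ≤ q := by omega
      refine ⟨⟨hy0, by omega⟩, ?_⟩
      have hmul : p * (f + y) ≤ p * (q - 1) := Nat.mul_le_mul_left p (by omega)
      have hq1 : p * (q - 1) + p = p * q := by
        have h4 : q - 1 + 1 = q := by omega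
        calc p * (q - 1) + p = p * ((q - 1) + 1) := by ring
          _ = p * q := by rw [h4]
      calc q * x + p * y = p * (f + y) + r := by rw [mul_add]; omega
        _ ≤ p * (q - 1) + r := by omega
        _ < p * q := by omega
  rw [← Finset.sum_filter, hfilter]
  have hm0 : 0 < q - f := by omega
  rw [ioo_sum _ hm0]
  have hstep : ∑ y ∈ Finset.range (q - f),
      ((p : ℚ) * q - 2 * ((q * x + p * y : ℕ) : ℚ))
      = ((q - f : ℕ) : ℚ) * ((p : ℚ) * q - 2 * ((q : ℚ) * x))
        + (-2 * p) * (((q - f : ℕ) : ℚ) * (((q - f : ℕ) : ℚ) - 1) / 2) := by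
    rw [Finset.sum_congr rfl (fun y _ => by push_cast; ring :
      ∀ y ∈ Finset.range (q - f),
        ((p : ℚ) * q - 2 * ((q * x + p * y : ℕ) : ℚ))
          = ((p : ℚ) * q - 2 * ((q : ℚ) * x)) + (-2 * (p : ℚ)) * y)]
    exact sum_affine _ _ _
  rw [hstep]
  have hcast : ((q - f : ℕ) : ℚ) = (q : ℚ) - f := by
    rw [Nat.cast_sub hfq.le]
  have hpfr : (p : ℚ) * f + r = (q : ℚ) * x := by exact_mod_cast hdm
  have hfval : (f : ℚ) = ((q : ℚ) * x - r) / p := by field_simp; linarith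
  rw [hcast, hfval]
  push_cast
  field_simp
  ring

open Classical in
theorem torus_L2_signature (p q : ℕ) (hp : 0 < p) (hq : 0 < q) (hpq : Nat.Coprime p q) :
    (2 / ((p : ℚ) * q)) *
        (∑ n ∈ (Finset.Ioo 0 (p * q)).filter
            (fun n => ∃ x y : ℕ, 0 < x ∧ x < p ∧ 0 < y ∧ y < q ∧ n = q * x + p * y),
          ((p : ℚ) * q - 2 * n)) =
      -(((p : ℚ) - 1) * ((p : ℚ) + 1) * ((q : ℚ) - 1) * ((q : ℚ) + 1)) / (3 * p * q) := by
  have hp0 : (p : ℚ) ≠ 0 := Nat.cast_ne_zero.mpr hp.ne'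
  have hq0 : (q : ℚ) ≠ 0 := Nat.cast_ne_zero.mpr hq.ne'
  -- rewrite the set as an image of the lattice grid
  have himg : (Finset.Ioo 0 (p * q)).filter
        (fun n => ∃ x y : ℕ, 0 < x ∧ x < p ∧ 0 < y ∧ y < q ∧ n = q * x + p * y)
      = ((Finset.Ioo 0 p ×ˢ Finset.Ioo 0 q).filter
          (fun z => q * z.1 + p * z.2 < p * q)).image (fun z => q * z.1 + p * z.2) := by
    ext n
    simp only [Finset.mem_filter, Finset.mem_image, Finset.mem_product, Finset.mem_Ioo]
    constructor
    · rintro ⟨⟨hn0, hnpq⟩, x, y, hx0, hxp, hy0, hyq, rfl⟩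
      exact ⟨(x, y), ⟨⟨⟨hx0, hxp⟩, hy0, hyq⟩, hnpq⟩, rfl⟩
    · rintro ⟨⟨x, y⟩, ⟨⟨⟨hx0, hxp⟩, hy0, hyq⟩, hlt⟩, rfl⟩
      exact ⟨⟨Nat.add_pos_left (Nat.mul_pos hq hx0) _, hlt⟩, x, y, hx0, hxp, hy0, hyq, rfl⟩
  have hinj : ∀ z₁ ∈ ((Finset.Ioo 0 p ×ˢ Finset.Ioo 0 q).filter
        (fun z => q * z.1 + p * z.2 < p * q)),
      ∀ z₂ ∈ ((Finset.Ioo 0 p ×ˢ Finset.Ioo 0 q).filter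
        (fun z => q * z.1 + p * z.2 < p * q)),
      (fun z : ℕ × ℕ => q * z.1 + p * z.2) z₁ = (fun z : ℕ × ℕ => q * z.1 + p * z.2) z₂ →
        z₁ = z₂ := by
    rintro ⟨x₁, y₁⟩ h₁ ⟨x₂, y₂⟩ h₂ h
    simp only [Finset.mem_filter, Finset.mem_product, Finset.mem_Ioo] at h₁ h₂
    simp only at h
    have hm : q * x₁ ≡ q * x₂ [MOD p] := by
      have h' : (q * x₁ + p * y₁) % p = (q * x₂ + p * y₂) % p := by rw [h]
      have h'' : q * x₁ % p = q * x₂ % p := by simpa [Nat.add_mul_mod_self_left] using h'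
      exact h''
    have hx : x₁ = x₂ :=
      (Nat.ModEq.cancel_left_of_coprime hpq hm).eq_of_lt_of_lt h₁.1.1.2 h₂.1.1.2
    subst hx
    have hy : y₁ = y₂ := Nat.eq_of_mul_eq_mul_left hp (by omega)
    rw [hy]
  rw [himg, Finset.sum_image hinj]
  rw [Finset.sum_filter, Finset.sum_product]
  have key : ∀ x ∈ Finset.Ioo 0 p,
      (∑ y ∈ Finset.Ioo 0 q,
          if q * x + p * y < p * q then ((p : ℚ) * q - 2 * ((q * x + p * y : ℕ) : ℚ)) else 0)
        = (-(((q : ℚ) - 1) * q)) * x + (-((q : ℚ) - 1)) * ((q * x % p : ℕ) : ℚ)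
          + ((q : ℚ) ^ 2 / p) * (x : ℚ) ^ 2 + (-(1 / (p : ℚ))) * ((q * x % p : ℕ) : ℚ) ^ 2 := by
    intro x hx
    rw [Finset.mem_Ioo] at hx
    have hdm : p * (q * x / p) + q * x % p = q * x := Nat.div_add_mod (q * x) p
    have hrp : q * x % p < p := Nat.mod_lt _ hp
    have hr0 : 0 < q * x % p := by
      rcases Nat.eq_zero_or_pos (q * x % p) with h0 | h0
      · exfalso
        have hdvd : p ∣ q * x := Nat.dvd_of_mod_eq_zero h0
        have hdx : p ∣ x := Nat.Coprime.dvd_of_dvd_mul_left hpq hdvd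
        have := Nat.le_of_dvd hx.1 hdx
        omega
      · exact h0
    have hfq : q * x / p < q := by
      rw [Nat.div_lt_iff_lt_mul hp]
      exact Nat.mul_lt_mul_of_pos_left hx.2 hq
    exact torusInnerSum p q x (q * x / p) (q * x % p) hp hq hdm hr0 hrp hfq
  rw [Finset.sum_congr rfl key]
  simp only [Finset.sum_add_distrib, ← Finset.mul_sum]
  rw [perm_sum p q hp hpq (fun n => (n : ℚ)), perm_sum p q hp hpq (fun n => (n : ℚ) ^ 2)]
  have hS1 : ∑ x ∈ Finset.Ioo 0 p, (x : ℚ) = p * ((p : ℚ) - 1) / 2 := by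
    rw [ioo_sum _ hp, sum_range_cast]
    simp
  have hS2 : ∑ x ∈ Finset.Ioo 0 p, (x : ℚ) ^ 2
      = (p : ℚ) * ((p : ℚ) - 1) * (2 * p - 1) / 6 := by
    rw [ioo_sum _ hp, sum_range_sq_cast]
    norm_num
  rw [hS1, hS2]
  field_simp
  ring
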